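/- Let Ω be an open subset of ℝ^d, let θ : ℝ^d → ℝ be continuous with compact support contained in Ω, and let φ : ℝ^d → ℝ be continuous and ℤ^d-periodic (i.e. φ(x+k)=φ(x) for all k ∈ ℤ^d). Then, as ε → 0⁺, ∫_Ω θ(x) φ(x/ε) dx converges to (∫_{[0,1]^d} φ(z) dz) · (∫_Ω θ(x) dx). -/

import Mathlib

open MeasureTheory Filter Topology

/-- The unit cube `[0,1]^d` in `ℝ^d`, representing the torus `T^d`. -/
def cube (d : ℕ) : Set (Fin d → ℝ) := Set.Icc 0 1

/-- A function on `ℝ^d` is `ℤ^d`-periodic. -/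
def ZPeriodic {d : ℕ} (φ : (Fin d → ℝ) → ℝ) : Prop :=
  ∀ (x : Fin d → ℝ) (k : Fin d → ℤ), φ (x + fun i => (k i : ℝ)) = φ x

section Aux

open Set FourierTransform Real

noncomputable section

def torPi (d : ℕ) : (Fin d → ℝ) → (Fin d → AddCircle (1:ℝ)) :=
  fun x i => (x i : AddCircle (1:ℝ))

lemma torPi_oqm (d : ℕ) : IsOpenQuotientMap (torPi d) :=
  IsOpenQuotientMap.piMap (fun _ => QuotientAddGroup.isOpenQuotientMap_mk)

abbrev Tor (d : ℕ) := Fin d → AddCircle (1:ℝ)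

/-- character -/
def tchar (d : ℕ) (k : Fin d → ℤ) : C(Tor d, ℂ) :=
  ⟨fun z => ∏ i, fourier (k i) (z i),
    continuous_finset_prod _ fun i _ => (fourier (k i)).continuous.comp (continuous_apply i)⟩

lemma tchar_apply (d : ℕ) (k : Fin d → ℤ) (z : Tor d) :
    tchar d k z = ∏ i, fourier (k i) (z i) := rfl

lemma tchar_mul (d : ℕ) (k l : Fin d → ℤ) : tchar d k * tchar d l = tchar d (k + l) := by
  ext z
  simp only [ContinuousMap.mul_apply, tchar_apply, ← Finset.prod_mul_distrib]
  refine Finset.prod_congr rfl fun i _ => ?_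
  rw [Pi.add_apply, fourier_add]

lemma tchar_zero (d : ℕ) : tchar d 0 = 1 := by
  ext z; simp [tchar_apply, fourier_zero]

lemma tchar_star (d : ℕ) (k : Fin d → ℤ) : star (tchar d k) = tchar d (-k) := by
  ext z
  simp only [ContinuousMap.star_apply, tchar_apply, starRingEnd_apply, ← map_prod]
  rw [← starRingEnd_apply, map_prod]
  refine Finset.prod_congr rfl fun i _ => ?_
  rw [Pi.neg_apply, fourier_neg, starRingEnd_apply]

def charSpan (d : ℕ) : Submodule ℂ C(Tor d, ℂ) := Submodule.span ℂ (Set.range (tchar d))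

lemma charSpan_mul {d : ℕ} {f g : C(Tor d, ℂ)} (hf : f ∈ charSpan d) (hg : g ∈ charSpan d) :
    f * g ∈ charSpan d := by
  induction hf using Submodule.span_induction with
  | mem x hx =>
    induction hg using Submodule.span_induction with
    | mem y hy =>
      obtain ⟨k, rfl⟩ := hx; obtain ⟨l, rfl⟩ := hy
      rw [tchar_mul]; exact Submodule.subset_span ⟨k + l, rfl⟩
    | zero => rw [mul_zero]; exact (charSpan d).zero_mem
    | add y z _ _ hy hz => rw [mul_add]; exact (charSpan d).add_mem hy hz
    | smul c y _ hy => rw [mul_smul_comm]; exact (charSpan d).smul_mem c hy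
  | zero => rw [zero_mul]; exact (charSpan d).zero_mem
  | add x y _ _ hx hy => rw [add_mul]; exact (charSpan d).add_mem hx hy
  | smul c x _ hx => rw [smul_mul_assoc]; exact (charSpan d).smul_mem c hx

lemma charSpan_star {d : ℕ} {f : C(Tor d, ℂ)} (hf : f ∈ charSpan d) : star f ∈ charSpan d := by
  induction hf using Submodule.span_induction with
  | mem x hx => obtain ⟨k, rfl⟩ := hx; rw [tchar_star]; exact Submodule.subset_span ⟨-k, rfl⟩
  | zero => rw [star_zero]; exact (charSpan d).zero_mem
  | add x y _ _ hx hy => rw [star_add]; exact (charSpan d).add_mem hx hy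
  | smul c x _ hx => rw [star_smul]; exact (charSpan d).smul_mem _ hx

def charAlg (d : ℕ) : StarSubalgebra ℂ C(Tor d, ℂ) where
  carrier := charSpan d
  mul_mem' := charSpan_mul
  one_mem' := by rw [← tchar_zero]; exact Submodule.subset_span ⟨0, rfl⟩
  add_mem' := fun ha hb => (charSpan d).add_mem ha hb
  zero_mem' := (charSpan d).zero_mem
  algebraMap_mem' := fun c => by
    have : (algebraMap ℂ C(Tor d, ℂ)) c = c • 1 := by
      simp [Algebra.algebraMap_eq_smul_one]
    rw [this]
    exact (charSpan d).smul_mem c (by rw [← tchar_zero]; exact Submodule.subset_span ⟨0, rfl⟩)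
  star_mem' := charSpan_star

lemma tchar_single_apply (d : ℕ) (i : Fin d) (z : Tor d) :
    tchar d (Pi.single i 1) z = fourier 1 (z i) := by
  show (∏ j, fourier ((Pi.single i 1 : Fin d → ℤ) j) (z j)) = _
  rw [Fintype.prod_eq_single i (fun j hj => by rw [Pi.single_eq_of_ne hj]; exact fourier_zero)]
  rw [Pi.single_eq_same]

lemma mem_charAlg_of_char (d : ℕ) (k : Fin d → ℤ) : tchar d k ∈ charAlg d :=
  Submodule.subset_span ⟨k, rfl⟩

lemma charAlg_sep (d : ℕ) : (charAlg d).SeparatesPoints := by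
  intro z w hzw
  obtain ⟨i, hi⟩ := Function.ne_iff.mp hzw
  refine ⟨_, ⟨tchar d (Pi.single i 1), mem_charAlg_of_char d _, rfl⟩, ?_⟩
  simp only [tchar_single_apply]
  intro h
  apply hi
  have h2 : AddCircle.toCircle ((1:ℤ) • z i) = AddCircle.toCircle ((1:ℤ) • w i) := by
    apply Subtype.coe_injective
    simpa [fourier_apply] using h
  simpa using AddCircle.injective_toCircle one_ne_zero h2

lemma charAlg_dense (d : ℕ) (f : C(Tor d, ℂ)) {δ : ℝ} (hδ : 0 < δ) :
    ∃ g ∈ charAlg d, ∀ z, ‖f z - g z‖ < δ := by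
  have := ContinuousMap.starSubalgebra_topologicalClosure_eq_top_of_separatesPoints
    (charAlg d) (charAlg_sep d)
  have hf : f ∈ closure ((charAlg d) : Set C(Tor d, ℂ)) := by
    rw [← StarSubalgebra.topologicalClosure_coe, this]
    trivial
  obtain ⟨g, hg, hdist⟩ := Metric.mem_closure_iff.mp hf δ hδ
  refine ⟨g, hg, fun z => ?_⟩
  calc ‖f z - g z‖ = dist (f z) (g z) := by rw [dist_eq_norm]
    _ ≤ dist f g := ContinuousMap.dist_apply_le_dist z
    _ < δ := hdist

/-- 1-d exponential -/
def cexp1 (n : ℤ) (t : ℝ) : ℂ := Complex.exp (2 * Real.pi * Complex.I * n * t)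

lemma integral_cexp1 (n : ℤ) :
    ∫ t in Set.Icc (0:ℝ) 1, cexp1 n t = if n = 0 then 1 else 0 := by
  rcases eq_or_ne n 0 with rfl | hn
  · simp [cexp1]
  · simp only [if_neg hn]
    have hc : (2 * Real.pi * Complex.I * n : ℂ) ≠ 0 := by
      simp [Real.pi_ne_zero, Complex.I_ne_zero, hn]
    rw [MeasureTheory.integral_Icc_eq_integral_Ioc,
      ← intervalIntegral.integral_of_le (by norm_num : (0:ℝ) ≤ 1)]
    have : ∀ t : ℝ, cexp1 n t = Complex.exp ((2 * Real.pi * Complex.I * n) * t) := fun t => rfl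
    simp_rw [this]
    rw [integral_exp_mul_complex hc]
    have : Complex.exp (2 * Real.pi * Complex.I * n * (1:ℝ)) = 1 := by
      rw [Complex.ofReal_one, mul_one]
      have := Complex.exp_int_mul_two_pi_mul_I n
      rw [← this]; ring_nf
    rw [this]
    simp

lemma cube_indicator_factor (d : ℕ) (k : Fin d → ℤ) (z : Fin d → ℝ) :
    (cube d).indicator (fun z => ∏ i, cexp1 (k i) (z i)) z
      = ∏ i, (Set.Icc (0:ℝ) 1).indicator (cexp1 (k i)) (z i) := by
  by_cases hz : z ∈ cube d
  · rw [Set.indicator_of_mem hz]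
    rw [show cube d = Set.Icc 0 1 from rfl, Set.mem_Icc] at hz
    refine Finset.prod_congr rfl fun i _ => ?_
    exact (Set.indicator_of_mem (Set.mem_Icc.mpr ⟨hz.1 i, hz.2 i⟩) _).symm
  · rw [Set.indicator_of_notMem hz]
    rw [show cube d = Set.Icc 0 1 from rfl, Set.mem_Icc] at hz
    have : ∃ i, z i ∉ Set.Icc (0:ℝ) 1 := by
      by_contra h
      push_neg at h
      exact hz ⟨fun i => (Set.mem_Icc.mp (h i)).1, fun i => (Set.mem_Icc.mp (h i)).2⟩
    obtain ⟨i, hi⟩ := this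
    exact (Finset.prod_eq_zero (Finset.mem_univ i) (Set.indicator_of_notMem hi _)).symm

lemma integral_tchar_cube (d : ℕ) (k : Fin d → ℤ) :
    ∫ z in cube d, tchar d k (torPi d z) = if k = 0 then 1 else 0 := by
  have h1 : ∀ z : Fin d → ℝ, tchar d k (torPi d z) = ∏ i, cexp1 (k i) (z i) := by
    intro z
    show (∏ i, fourier (k i) ((z i : ℝ) : AddCircle (1:ℝ))) = _
    refine Finset.prod_congr rfl fun i _ => ?_
    rw [fourier_coe_apply]
    simp [cexp1]
  simp_rw [h1]
  rw [← MeasureTheory.integral_indicator (s := cube d) (by exact measurableSet_Icc)]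
  simp_rw [cube_indicator_factor]
  rw [MeasureTheory.integral_fintype_prod_volume_eq_prod (f := fun i t => (Set.Icc (0:ℝ) 1).indicator (cexp1 (k i)) t)]
  have h2 : ∀ i, (∫ t, (Set.Icc (0:ℝ) 1).indicator (cexp1 (k i)) t)
      = if k i = 0 then (1:ℂ) else 0 := by
    intro i
    rw [MeasureTheory.integral_indicator measurableSet_Icc]
    exact integral_cexp1 (k i)
  simp_rw [h2]
  rcases eq_or_ne k 0 with rfl | hk
  · simp
  · rw [if_neg hk]
    obtain ⟨i, hi⟩ := Function.ne_iff.mp hk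
    exact Finset.prod_eq_zero (Finset.mem_univ i) (by simpa using hi)

def lk (d : ℕ) (k : Fin d → ℤ) : (Fin d → ℝ) →L[ℝ] ℝ :=
  ∑ i, (k i : ℝ) • ContinuousLinearMap.proj (R := ℝ) (φ := fun _ : Fin d => ℝ) i

lemma lk_apply (d : ℕ) (k : Fin d → ℤ) (x : Fin d → ℝ) :
    lk d k x = ∑ i, (k i : ℝ) * x i := by
  simp [lk, ContinuousLinearMap.sum_apply]

lemma lk_ne_zero (d : ℕ) {k : Fin d → ℤ} (hk : k ≠ 0) : lk d k ≠ 0 := by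
  intro h
  obtain ⟨i, hi⟩ := Function.ne_iff.mp hk
  have h2 : lk d k (fun j => (k j : ℝ)) = 0 := by rw [h]; rfl
  rw [lk_apply] at h2
  have : ∑ j, ((k j : ℝ) * (k j : ℝ)) = 0 := h2
  have hz := (Finset.sum_eq_zero_iff_of_nonneg (fun j _ => mul_self_nonneg ((k j : ℝ)))).mp this
    i (Finset.mem_univ i)
  have : (k i : ℝ) = 0 := by nlinarith [hz]
  exact hi (by exact_mod_cast this)

lemma tendsto_w_cocompact (d : ℕ) {k : Fin d → ℤ} (hk : k ≠ 0) :
    Tendsto (fun ε : ℝ => (-ε⁻¹) • lk d k) (𝓝[>] (0:ℝ))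
      (cocompact ((Fin d → ℝ) →L[ℝ] ℝ)) := by
  rw [← Metric.cobounded_eq_cocompact, ← tendsto_norm_atTop_iff_cobounded]
  have hL : 0 < ‖lk d k‖ := norm_pos_iff.mpr (lk_ne_zero d hk)
  have h1 : Tendsto (fun ε : ℝ => ε⁻¹ * ‖lk d k‖) (𝓝[>] (0:ℝ)) atTop :=
    tendsto_inv_nhdsGT_zero.atTop_mul_const hL
  refine h1.congr' ?_
  filter_upwards [self_mem_nhdsWithin] with ε (hε : 0 < ε)
  rw [norm_smul (α := ℝ) (β := (Fin d → ℝ) →L[ℝ] ℝ) (-ε⁻¹) (lk d k)]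
  simp [abs_of_pos hε]

lemma integrand_eq (d : ℕ) (k : Fin d → ℤ) (θ : (Fin d → ℝ) → ℝ) (ε : ℝ) (x : Fin d → ℝ) :
    𝐞 (-((-ε⁻¹) • lk d k) x) • ((θ x : ℂ)) = (θ x : ℂ) * tchar d k (torPi d (ε⁻¹ • x)) := by
  have key : (𝐞 (-((-ε⁻¹) • lk d k) x) : ℂ) = tchar d k (torPi d (ε⁻¹ • x)) := by
    rw [Real.fourierChar_apply]
    show Complex.exp _ = ∏ i, fourier (k i) (((ε⁻¹ • x) i : ℝ) : AddCircle (1:ℝ))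
    have hfi : ∀ i : Fin d, fourier (k i) (((ε⁻¹ • x) i : ℝ) : AddCircle (1:ℝ))
        = Complex.exp (2 * Real.pi * Complex.I * (k i) * (ε⁻¹ * x i) / 1) := by
      intro i; rw [fourier_coe_apply]; norm_num
    simp_rw [hfi]
    rw [← Complex.exp_sum]
    congr 1
    have h2 : -((-ε⁻¹) • lk d k) x = ∑ i, ε⁻¹ * ((k i : ℝ) * x i) := by
      simp [lk_apply, Finset.mul_sum]
    rw [h2]
    push_cast
    rw [Finset.mul_sum, Finset.sum_mul]
    refine Finset.sum_congr rfl fun i _ => ?_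
    ring
  rw [Circle.smul_def, key, mul_comm]
  try rw [smul_eq_mul]

lemma tendsto_char_zero (d : ℕ) (θ : (Fin d → ℝ) → ℝ) {k : Fin d → ℤ} (hk : k ≠ 0) :
    Tendsto (fun ε : ℝ => ∫ x : Fin d → ℝ, (θ x : ℂ) * tchar d k (torPi d (ε⁻¹ • x)))
      (𝓝[>] (0:ℝ)) (𝓝 0) := by
  have := (tendsto_integral_exp_smul_cocompact (fun x : Fin d → ℝ => (θ x : ℂ))
    volume).comp (tendsto_w_cocompact d hk)
  refine this.congr fun ε => ?_
  exact integral_congr_ae (Eventually.of_forall fun x => integrand_eq d k θ ε x)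

/-- representative of a point on the circle -/
def circRep (z : AddCircle (1:ℝ)) : ℝ := (AddCircle.equivIco 1 0 z : ℝ)

lemma circRep_coe (z : AddCircle (1:ℝ)) : ((circRep z : ℝ) : AddCircle (1:ℝ)) = z :=
  (AddCircle.equivIco 1 0).symm_apply_apply z

lemma exists_lift {d : ℕ} (φ : (Fin d → ℝ) → ℝ) (hφc : Continuous φ) (hφp : ZPeriodic φ) :
    ∃ Φ : C(Tor d, ℂ), ∀ x : Fin d → ℝ, Φ (torPi d x) = (φ x : ℂ) := by
  set Φ₀ : Tor d → ℂ := fun z => (φ (fun i => circRep (z i)) : ℂ) with hΦ₀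
  have hcomp : ∀ x : Fin d → ℝ, Φ₀ (torPi d x) = (φ x : ℂ) := by
    intro x
    have hmem : ∀ i, ∃ n : ℤ, circRep ((x i : AddCircle (1:ℝ))) = x i + (n : ℝ) := by
      intro i
      have h1 : ((circRep ((x i : AddCircle (1:ℝ))) : ℝ) : AddCircle (1:ℝ)) = (x i : AddCircle (1:ℝ)) :=
        circRep_coe _
      rw [QuotientAddGroup.eq] at h1
      obtain ⟨n, hn⟩ := AddSubgroup.mem_zmultiples_iff.mp h1
      refine ⟨-n, ?_⟩
      have : (n : ℝ) = -circRep ((x i : AddCircle (1:ℝ))) + x i := by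
        rw [← hn]; simp
      push_cast
      linarith [this]
    choose n hn using hmem
    have : (fun i => circRep ((x i : AddCircle (1:ℝ)))) = x + fun i => ((n i : ℝ)) := by
      funext i; exact hn i
    rw [hΦ₀]
    simp only
    rw [show (fun i => circRep (torPi d x i)) = x + fun i => ((n i : ℝ)) from this, hφp x n]
  have hcont : Continuous Φ₀ := by
    have : Continuous (Φ₀ ∘ torPi d) :=
      (Complex.continuous_ofReal.comp hφc).congr (fun x => (hcomp x).symm)
    exact ((torPi_oqm d).isQuotientMap.continuous_iff).mpr this
  exact ⟨⟨Φ₀, hcont⟩, hcomp⟩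

section main
variable (d : ℕ) (θ : (Fin d → ℝ) → ℝ)

def Ffun (f : C(Tor d, ℂ)) (ε : ℝ) : ℂ := ∫ x : Fin d → ℝ, (θ x : ℂ) * f (torPi d (ε⁻¹ • x))
def Mval (f : C(Tor d, ℂ)) : ℂ := ∫ z in cube d, f (torPi d z)
def Ith : ℂ := ∫ x : Fin d → ℝ, (θ x : ℂ)
def Pprop (f : C(Tor d, ℂ)) : Prop :=
  Tendsto (Ffun d θ f) (𝓝[>] (0:ℝ)) (𝓝 (Mval d f * Ith d θ))

variable {d θ}
variable (hθc : Continuous θ) (hθs : HasCompactSupport θ)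

include hθc hθs in
lemma integrable_integrand (f : C(Tor d, ℂ)) (ε : ℝ) :
    Integrable (fun x : Fin d → ℝ => (θ x : ℂ) * f (torPi d (ε⁻¹ • x))) := by
  have hc : Continuous fun x : Fin d → ℝ => (θ x : ℂ) * f (torPi d (ε⁻¹ • x)) :=
    (Complex.continuous_ofReal.comp hθc).mul
      (f.continuous.comp ((torPi_oqm d).continuous.comp (continuous_const_smul _)))
  have hθℂ : HasCompactSupport (fun x : Fin d → ℝ => (θ x : ℂ)) :=
    hθs.comp_left (g := Complex.ofReal) Complex.ofReal_zero
  exact hc.integrable_of_hasCompactSupport (hθℂ.mul_right)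

lemma integrableOn_cube (f : C(Tor d, ℂ)) :
    IntegrableOn (fun z => f (torPi d z)) (cube d) := by
  exact ((f.continuous.comp (torPi_oqm d).continuous).continuousOn).integrableOn_compact
    (isCompact_Icc (α := Fin d → ℝ))

lemma volume_cube : (volume (cube d)).toReal = 1 := by
  rw [show cube d = Set.Icc 0 1 from rfl,
    Real.volume_Icc_pi_toReal (by intro i; norm_num : (0 : Fin d → ℝ) ≤ 1)]
  simp

include hθc hθs in
lemma Pprop_span {f : C(Tor d, ℂ)}
    (hchar : ∀ k : Fin d → ℤ, Pprop d θ (tchar d k))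
    (hf : f ∈ Submodule.span ℂ (Set.range (tchar d))) : Pprop d θ f := by
  induction hf using Submodule.span_induction with
  | mem x hx => obtain ⟨k, rfl⟩ := hx; exact hchar k
  | zero =>
    have h1 : Ffun d θ 0 = fun _ => 0 := by
      funext ε; simp [Ffun]
    have h2 : Mval d (0 : C(Tor d, ℂ)) = 0 := by simp [Mval]
    rw [Pprop, h1, h2, zero_mul]
    exact tendsto_const_nhds
  | add x y hx hy hPx hPy =>
    have h1 : Ffun d θ (x + y) = fun ε => Ffun d θ x ε + Ffun d θ y ε := by
      funext ε
      simp only [Ffun, ContinuousMap.add_apply, mul_add]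
      exact integral_add (integrable_integrand hθc hθs x ε) (integrable_integrand hθc hθs y ε)
    have h2 : Mval d (x + y) = Mval d x + Mval d y := by
      simp only [Mval, ContinuousMap.add_apply]
      exact integral_add (integrableOn_cube x) (integrableOn_cube y)
    rw [Pprop, h1, h2, add_mul]
    exact hPx.add hPy
  | smul c x hx hPx =>
    have h1 : Ffun d θ (c • x) = fun ε => c • Ffun d θ x ε := by
      funext ε
      simp only [Ffun, ContinuousMap.smul_apply, smul_eq_mul]
      rw [← integral_const_mul]
      congr 1; funext xx; ring
    have h2 : Mval d (c • x) = c • Mval d x := by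
      simp only [Mval, ContinuousMap.smul_apply, smul_eq_mul]
      rw [← integral_const_mul]
    rw [Pprop, h1, h2, smul_eq_mul, mul_assoc, ← smul_eq_mul]
    exact hPx.const_smul c

include hθc hθs in
lemma Pprop_closure (f : C(Tor d, ℂ))
    (happrox : ∀ δ : ℝ, 0 < δ → ∃ g : C(Tor d, ℂ), Pprop d θ g ∧ ∀ z, ‖f z - g z‖ < δ) :
    Pprop d θ f := by
  set C : ℝ := ∫ x : Fin d → ℝ, ‖θ x‖ with hC
  have hθint : Integrable θ := hθc.integrable_of_hasCompactSupport hθs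
  have hC0 : 0 ≤ C := integral_nonneg (fun x => norm_nonneg _)
  have hIth : ‖Ith d θ‖ ≤ C := by
    refine (norm_integral_le_integral_norm _).trans_eq ?_
    simp [hC]
  have hFbound : ∀ (g : C(Tor d, ℂ)) (δ : ℝ), 0 ≤ δ → (∀ z, ‖f z - g z‖ ≤ δ) →
      ∀ ε : ℝ, ‖Ffun d θ f ε - Ffun d θ g ε‖ ≤ C * δ := by
    intro g δ hδ hfg ε
    rw [Ffun, Ffun, ← integral_sub (integrable_integrand hθc hθs f ε)
      (integrable_integrand hθc hθs g ε)]
    have heq : ∀ x : Fin d → ℝ, (θ x : ℂ) * f (torPi d (ε⁻¹ • x))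
        - (θ x : ℂ) * g (torPi d (ε⁻¹ • x))
        = (θ x : ℂ) * (f (torPi d (ε⁻¹ • x)) - g (torPi d (ε⁻¹ • x))) := fun x => by ring
    simp_rw [heq]
    have hbound : ∀ x : Fin d → ℝ,
        ‖(θ x : ℂ) * (f (torPi d (ε⁻¹ • x)) - g (torPi d (ε⁻¹ • x)))‖ ≤ ‖θ x‖ * δ := by
      intro x
      rw [norm_mul, Complex.norm_real]
      exact mul_le_mul_of_nonneg_left (hfg _) (norm_nonneg _)
    calc ‖∫ x : Fin d → ℝ, (θ x : ℂ) * (f (torPi d (ε⁻¹ • x)) - g (torPi d (ε⁻¹ • x)))‖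
        ≤ ∫ x : Fin d → ℝ, ‖θ x‖ * δ := by
          refine norm_integral_le_of_norm_le (hθint.norm.mul_const δ) ?_
          exact Eventually.of_forall hbound
      _ = C * δ := by rw [integral_mul_const]
  have hMbound : ∀ (g : C(Tor d, ℂ)) (δ : ℝ), 0 ≤ δ → (∀ z, ‖f z - g z‖ ≤ δ) →
      ‖Mval d f - Mval d g‖ ≤ δ := by
    intro g δ hδ hfg
    rw [Mval, Mval, ← integral_sub (integrableOn_cube f) (integrableOn_cube g)]
    have hfin : volume (cube d) < ⊤ := (isCompact_Icc (α := Fin d → ℝ)).measure_lt_top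
    have hmeas : AEStronglyMeasurable (fun z => f (torPi d z) - g (torPi d z))
        (volume.restrict (cube d)) :=
      (((f.continuous.sub g.continuous).comp (torPi_oqm d).continuous)).aestronglyMeasurable.restrict
    have := norm_setIntegral_le_of_norm_le_const (μ := volume) (s := cube d)
      (C := δ) (f := fun z => f (torPi d z) - g (torPi d z)) hfin (fun z _ => hfg _)
    calc ‖∫ z in cube d, (f (torPi d z) - g (torPi d z))‖ ≤ δ * (volume (cube d)).toReal := this
      _ = δ := by rw [volume_cube (d := d)]; ring
  rw [Pprop, Metric.tendsto_nhds]
  intro r hr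
  set δ : ℝ := r / (4 * (C + 1)) with hδdef
  have hδpos : 0 < δ := by positivity
  obtain ⟨g, hPg, hfg⟩ := happrox δ hδpos
  have hfg' : ∀ z, ‖f z - g z‖ ≤ δ := fun z => (hfg z).le
  have hsmall := (Metric.tendsto_nhds.mp hPg) (r/4) (by positivity)
  filter_upwards [hsmall] with ε hε
  have e1 := hFbound g δ hδpos.le hfg' ε
  have e2 := hMbound g δ hδpos.le hfg'
  rw [dist_eq_norm] at hε ⊢
  have tri : ‖Ffun d θ f ε - Mval d f * Ith d θ‖
      ≤ ‖Ffun d θ f ε - Ffun d θ g ε‖ + ‖Ffun d θ g ε - Mval d g * Ith d θ‖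
        + ‖Mval d g * Ith d θ - Mval d f * Ith d θ‖ := by
    have : Ffun d θ f ε - Mval d f * Ith d θ
        = (Ffun d θ f ε - Ffun d θ g ε) + (Ffun d θ g ε - Mval d g * Ith d θ)
          + (Mval d g * Ith d θ - Mval d f * Ith d θ) := by ring
    rw [this]
    exact (norm_add_le _ _).trans (by gcongr; exact norm_add_le _ _)
  have e3 : ‖Mval d g * Ith d θ - Mval d f * Ith d θ‖ ≤ δ * C := by
    have : Mval d g * Ith d θ - Mval d f * Ith d θ = (Mval d g - Mval d f) * Ith d θ := by ring
    rw [this, norm_mul]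
    have h4 : ‖Mval d g - Mval d f‖ ≤ δ := by
      rw [norm_sub_rev]; exact e2
    exact mul_le_mul h4 hIth (norm_nonneg _) hδpos.le
  have h5 : (C + 1) * δ = r / 4 := by
    rw [hδdef]; field_simp
  have hCδ : C * δ ≤ r / 4 := by
    rw [← h5]
    have := mul_le_mul_of_nonneg_right (le_of_lt (lt_add_one C)) hδpos.le
    linarith
  have hδC : δ * C ≤ r / 4 := by rw [mul_comm]; exact hCδ
  linarith [tri, e1, e3, hε]


include hθc hθs in
lemma Pprop_char (k : Fin d → ℤ) : Pprop d θ (tchar d k) := by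
  rcases eq_or_ne k 0 with rfl | hk
  · have h1 : Ffun d θ (tchar d 0) = fun _ => Ith d θ := by
      funext ε
      rw [Ffun, Ith]
      congr 1
      funext x
      rw [tchar_zero]
      simp
    have h2 : Mval d (tchar d 0) = 1 := by
      rw [Mval]
      have := integral_tchar_cube d 0
      rw [if_pos rfl] at this
      exact this
    rw [Pprop, h1, h2, one_mul]
    exact tendsto_const_nhds
  · have h2 : Mval d (tchar d k) = 0 := by
      rw [Mval]
      have := integral_tchar_cube d k
      rw [if_neg hk] at this
      exact this
    rw [Pprop, h2, zero_mul]
    exact tendsto_char_zero d θ hk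

include hθc hθs in
lemma Pprop_all (Φ : C(Tor d, ℂ)) : Pprop d θ Φ := by
  apply Pprop_closure hθc hθs
  intro δ hδ
  obtain ⟨g, hg, hclose⟩ := charAlg_dense d Φ hδ
  exact ⟨g, Pprop_span hθc hθs (fun k => Pprop_char hθc hθs k) hg, hclose⟩

end main

end
end Aux

/-- for `θ` continuous with compact support in the open set `Ω` and
`φ` continuous and `ℤ^d`-periodic, `∫_Ω θ(x) φ(x/ε) dx → (∫_{[0,1]^d} φ) (∫_Ω θ)`
as `ε → 0⁺`. -/
theorem statement0 (d : ℕ) (Ω : Set (Fin d → ℝ)) (hΩ : IsOpen Ω)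
    (θ φ : (Fin d → ℝ) → ℝ)
    (hθc : Continuous θ) (hθs : HasCompactSupport θ) (hθΩ : tsupport θ ⊆ Ω)
    (hφc : Continuous φ) (hφp : ZPeriodic φ) :
    Tendsto (fun ε : ℝ => ∫ x in Ω, θ x * φ (ε⁻¹ • x)) (𝓝[>] (0:ℝ))
      (𝓝 ((∫ z in cube d, φ z) * ∫ x in Ω, θ x)) := by
  have hzero : ∀ x, x ∉ Ω → θ x = 0 := fun x hx =>
    image_eq_zero_of_notMem_tsupport (fun h => hx (hθΩ h))
  have hset : ∀ ε : ℝ, (∫ x in Ω, θ x * φ (ε⁻¹ • x))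
      = ∫ x : Fin d → ℝ, θ x * φ (ε⁻¹ • x) := by
    intro ε
    exact setIntegral_eq_integral_of_forall_compl_eq_zero
      (fun x hx => by rw [hzero x hx, zero_mul])
  have hset2 : (∫ x in Ω, θ x) = ∫ x : Fin d → ℝ, θ x :=
    setIntegral_eq_integral_of_forall_compl_eq_zero (fun x hx => hzero x hx)
  obtain ⟨Φ, hΦ⟩ := exists_lift φ hφc hφp
  have hP : Pprop d θ Φ := Pprop_all hθc hθs Φ
  have hF : ∀ ε : ℝ, Ffun d θ Φ ε = ((∫ x : Fin d → ℝ, θ x * φ (ε⁻¹ • x) : ℝ) : ℂ) := by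
    intro ε
    have heq : (fun x : Fin d → ℝ => (θ x : ℂ) * Φ (torPi d (ε⁻¹ • x)))
        = fun x : Fin d → ℝ => ((θ x * φ (ε⁻¹ • x) : ℝ) : ℂ) := by
      funext x
      rw [hΦ]
      push_cast
      ring
    rw [Ffun, heq]
    exact integral_ofReal
  have hM : Mval d Φ = ((∫ z in cube d, φ z : ℝ) : ℂ) := by
    have heq : (fun z => Φ (torPi d z)) = fun z : Fin d → ℝ => ((φ z : ℝ) : ℂ) := by
      funext z
      rw [hΦ]
    rw [Mval, heq]
    exact integral_ofReal
  have hI : Ith d θ = ((∫ x : Fin d → ℝ, θ x : ℝ) : ℂ) := by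
    rw [Ith]
    exact integral_ofReal
  have hℂ : Tendsto (fun ε : ℝ => ((∫ x : Fin d → ℝ, θ x * φ (ε⁻¹ • x) : ℝ) : ℂ))
      (𝓝[>] (0:ℝ))
      (𝓝 (((∫ z in cube d, φ z : ℝ) : ℂ) * ((∫ x : Fin d → ℝ, θ x : ℝ) : ℂ))) := by
    have := hP
    rw [Pprop, hM, hI] at this
    exact this.congr hF
  have hre := (Complex.continuous_re.tendsto _).comp hℂ
  simp only [Function.comp_def] at hre
  rw [hset2]
  simp_rw [hset]
  have h5 : (((∫ z in cube d, φ z : ℝ) : ℂ) * ((∫ x : Fin d → ℝ, θ x : ℝ) : ℂ)).re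
      = (∫ z in cube d, φ z) * ∫ x : Fin d → ℝ, θ x := by
    rw [← Complex.ofReal_mul, Complex.ofReal_re]
  rw [← h5]
  exact hre.congr fun ε => Complex.ofReal_re _
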